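/- Let H(z1, z2) = (1 − z1)(1 − z2)(e^{z1 + z2} + 1). Then for all (z1, z2) ∈ [−1, 0)^2 one has 2 = H(0, 0) < H(z1, z2) ≤ H(−1, −1) = 4(1 + e^{−2}). -/

import Mathlib

lemma H_aux_strictAnti (c : ℝ) (hc : c ≤ 0) :
    StrictAntiOn (fun s : ℝ => (1 - s) * (Real.exp (s + c) + 1)) (Set.Iic 0) := by
  apply strictAntiOn_of_deriv_neg (convex_Iic 0)
  · exact Continuous.continuousOn (by continuity)
  · intro x hx
    rw [interior_Iic] at hx
    have hx0 : x < 0 := hx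
    have hd : HasDerivAt (fun s : ℝ => (1 - s) * (Real.exp (s + c) + 1))
        ((-1) * (Real.exp (x + c) + 1) + (1 - x) * Real.exp (x + c)) x := by
      have h1 : HasDerivAt (fun s : ℝ => 1 - s) (-1) x := (hasDerivAt_id x).const_sub 1
      have h2 : HasDerivAt (fun s : ℝ => Real.exp (s + c) + 1) (Real.exp (x + c)) x := by
        have := (((hasDerivAt_id x).add_const c).exp).add_const 1
        simpa using this
      exact (h1.mul h2).congr_deriv (by ring)
    rw [hd.deriv]
    -- deriv = -1 - x * exp (x + c); show < 0 using -x * exp x ≤ exp (-1)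
    have key : -x ≤ Real.exp (-x - 1) := by
      have := Real.add_one_le_exp (-x - 1)
      linarith
    have hxe : -x * Real.exp (x + c) ≤ Real.exp (-1) := by
      have h3 : Real.exp (x + c) ≤ Real.exp x := Real.exp_le_exp.2 (by linarith)
      have h4 : -x * Real.exp (x + c) ≤ -x * Real.exp x :=
        mul_le_mul_of_nonneg_left h3 (by linarith)
      have h5 : -x * Real.exp x ≤ Real.exp (-x - 1) * Real.exp x :=
        mul_le_mul_of_nonneg_right key (Real.exp_pos x).le
      rw [← Real.exp_add] at h5
      have : -x - 1 + x = -1 := by ring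
      rw [this] at h5
      linarith
    have he1 : Real.exp (-1) < 1 := Real.exp_lt_one_iff.2 (by norm_num)
    nlinarith [Real.exp_pos (x + c)]

/-- Extremal bounds for `H(z1,z2) = (1-z1)(1-z2)(e^{z1+z2} + 1)` on `[-1,0)^2`. -/
theorem H_bounds_DR
    (z1 z2 : ℝ) (h1 : z1 ∈ Set.Ico (-1 : ℝ) 0) (h2 : z2 ∈ Set.Ico (-1 : ℝ) 0) :
    (1 - (0:ℝ)) * (1 - (0:ℝ)) * (Real.exp (0 + 0) + 1) = 2 ∧
    (1 - (-1:ℝ)) * (1 - (-1:ℝ)) * (Real.exp ((-1) + (-1)) + 1)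
      = 4 * (1 + Real.exp (-2)) ∧
    2 < (1 - z1) * (1 - z2) * (Real.exp (z1 + z2) + 1) ∧
    (1 - z1) * (1 - z2) * (Real.exp (z1 + z2) + 1) ≤ 4 * (1 + Real.exp (-2)) := by
  obtain ⟨ha1, hb1⟩ := h1
  obtain ⟨ha2, hb2⟩ := h2
  refine ⟨by norm_num, by norm_num [show (-1:ℝ) + (-1) = -2 by ring]; ring, ?_, ?_⟩
  · -- lower bound
    have hs : z1 + z2 < 0 := by linarith
    have hg := H_aux_strictAnti 0 le_rfl (show z1 + z2 ∈ Set.Iic 0 from hs.le)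
      (show (0:ℝ) ∈ Set.Iic 0 from Set.mem_Iic.2 le_rfl) hs
    simp only [add_zero, Real.exp_zero] at hg
    -- hg : (1-0)*(e^0+1) < (1-(z1+z2))*(e^{z1+z2}+1), i.e. 2 < ...
    have hz12 : 0 < z1 * z2 := mul_pos_of_neg_of_neg hb1 hb2
    have hexp : 0 < Real.exp (z1 + z2) + 1 := by positivity
    nlinarith
  · -- upper bound: decrease z1 to -1, then z2 to -1
    have step1 : (1 - z1) * (Real.exp (z1 + z2) + 1)
        ≤ (1 - (-1)) * (Real.exp ((-1) + z2) + 1) := by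
      rcases eq_or_lt_of_le ha1 with h | h
      · rw [← h]
      · exact (H_aux_strictAnti z2 hb2.le (show (-1:ℝ) ∈ Set.Iic 0 by norm_num)
          (show z1 ∈ Set.Iic 0 from hb1.le) h).le
    have step2 : (1 - z2) * (Real.exp (z2 + (-1)) + 1)
        ≤ (1 - (-1)) * (Real.exp ((-1) + (-1)) + 1) := by
      rcases eq_or_lt_of_le ha2 with h | h
      · rw [← h]
      · exact (H_aux_strictAnti (-1) (by norm_num) (show (-1:ℝ) ∈ Set.Iic 0 by norm_num)
          (show z2 ∈ Set.Iic 0 from hb2.le) h).le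
    have hpos : 0 < 1 - z2 := by linarith
    have hcomm : Real.exp ((-1) + z2) = Real.exp (z2 + (-1)) := by ring_nf
    have h3 : (1 - z1) * (1 - z2) * (Real.exp (z1 + z2) + 1)
        ≤ (1 - z2) * ((1 - (-1)) * (Real.exp (z2 + (-1)) + 1)) := by
      rw [← hcomm]
      nlinarith
    have h4 : (1 - z2) * ((1 - (-1)) * (Real.exp (z2 + (-1)) + 1))
        ≤ 2 * ((1 - (-1)) * (Real.exp ((-1) + (-1)) + 1)) := by nlinarith [Real.exp_pos (z2 + (-1)), Real.exp_pos ((-1:ℝ)+(-1))]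
    have : ((-1:ℝ)) + (-1) = -2 := by ring
    rw [this] at h4
    norm_num at h4 ⊢
    linarith
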